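/- Let α₁, α₂ > 0 with α₁ + α₂ ≤ π/2, and let u₁, u₂ be unit vectors in ℝ^(d+1). Set w₁ := sin(α₁)·u₁, w₂ := sin(α₂)·u₂. If |w₁ + w₂| = sin(α₁ + α₂), then the angle between w₁ + w₂ and w₁ equals α₂, and the angle between w₁ + w₂ and w₂ equals α₁. -/

import Mathlib

open Real RealInnerProductSpace InnerProductGeometry

private lemma aux_angle (d : ℕ) (α₁ α₂ : ℝ) (hα₁ : 0 < α₁) (hα₂ : 0 < α₂)
    (hsum : α₁ + α₂ ≤ π / 2)
    (u₁ u₂ : EuclideanSpace ℝ (Fin (d + 1))) (hu₁ : ‖u₁‖ = 1) (hu₂ : ‖u₂‖ = 1)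
    (hnorm : ‖Real.sin α₁ • u₁ + Real.sin α₂ • u₂‖ = Real.sin (α₁ + α₂)) :
    InnerProductGeometry.angle (Real.sin α₁ • u₁ + Real.sin α₂ • u₂)
        (Real.sin α₁ • u₁) = α₂ := by
  have hπ := Real.pi_pos
  have hs1 : 0 < Real.sin α₁ := Real.sin_pos_of_pos_of_lt_pi hα₁ (by linarith)
  have hs2 : 0 < Real.sin α₂ := Real.sin_pos_of_pos_of_lt_pi hα₂ (by linarith)
  have hs : 0 < Real.sin (α₁ + α₂) :=
    Real.sin_pos_of_pos_of_lt_pi (by linarith) (by linarith)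
  have hself1 : ⟪u₁, u₁⟫ = (1 : ℝ) := by
    rw [real_inner_self_eq_norm_sq, hu₁]; norm_num
  have hself2 : ⟪u₂, u₂⟫ = (1 : ℝ) := by
    rw [real_inner_self_eq_norm_sq, hu₂]; norm_num
  -- expand the norm condition
  have hsq : ‖Real.sin α₁ • u₁ + Real.sin α₂ • u₂‖ ^ 2 = Real.sin (α₁ + α₂) ^ 2 := by
    rw [hnorm]
  rw [norm_add_sq_real] at hsq
  have hn1 : ‖Real.sin α₁ • u₁‖ = Real.sin α₁ := by
    rw [norm_smul, hu₁, Real.norm_eq_abs, abs_of_pos hs1, mul_one]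
  have hn2 : ‖Real.sin α₂ • u₂‖ = Real.sin α₂ := by
    rw [norm_smul, hu₂, Real.norm_eq_abs, abs_of_pos hs2, mul_one]
  have hin : ⟪Real.sin α₁ • u₁, Real.sin α₂ • u₂⟫ =
      Real.sin α₁ * Real.sin α₂ * ⟪u₁, u₂⟫ := by
    rw [real_inner_smul_left, real_inner_smul_right]; ring
  rw [hn1, hn2, hin] at hsq
  have hid : Real.sin (α₁ + α₂) ^ 2 =
      Real.sin α₁ ^ 2 + 2 * (Real.sin α₁ * Real.sin α₂ * Real.cos (α₁ + α₂))
        + Real.sin α₂ ^ 2 := by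
    rw [Real.sin_add, Real.cos_add]
    nlinarith [Real.sin_sq_add_cos_sq α₁, Real.sin_sq_add_cos_sq α₂]
  have hinner : ⟪u₁, u₂⟫ = Real.cos (α₁ + α₂) := by
    have h12 : Real.sin α₁ * Real.sin α₂ ≠ 0 := by positivity
    have : Real.sin α₁ * Real.sin α₂ * ⟪u₁, u₂⟫ =
        Real.sin α₁ * Real.sin α₂ * Real.cos (α₁ + α₂) := by linarith
    exact mul_left_cancel₀ h12 this
  -- inner product with w₁
  have hkey : Real.sin α₁ + Real.sin α₂ * Real.cos (α₁ + α₂) =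
      Real.sin (α₁ + α₂) * Real.cos α₂ := by
    rw [Real.sin_add, Real.cos_add]
    nlinarith [Real.sin_sq_add_cos_sq α₂]
  have hip : ⟪Real.sin α₁ • u₁ + Real.sin α₂ • u₂, Real.sin α₁ • u₁⟫ =
      Real.sin (α₁ + α₂) * Real.cos α₂ * Real.sin α₁ := by
    rw [inner_add_left, real_inner_smul_left, real_inner_smul_left,
      real_inner_smul_right, real_inner_smul_right, hself1]
    have hinner' : ⟪u₂, u₁⟫ = Real.cos (α₁ + α₂) := by
      rw [real_inner_comm]; exact hinner
    rw [hinner']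
    linear_combination Real.sin α₁ * hkey
  rw [InnerProductGeometry.angle, hip, hnorm, hn1]
  have : Real.sin (α₁ + α₂) * Real.cos α₂ * Real.sin α₁ /
      (Real.sin (α₁ + α₂) * Real.sin α₁) = Real.cos α₂ := by
    field_simp
  rw [this, Real.arccos_cos (le_of_lt hα₂) (by linarith)]

/-- Law-of-cosines computation from Lemma 2 of the paper: if `α₁, α₂ > 0` with
`α₁ + α₂ ≤ π/2`, `u₁, u₂` are unit vectors, `wᵢ = sin αᵢ • uᵢ` and
`‖w₁ + w₂‖ = sin (α₁ + α₂)`, then `∠(w₁ + w₂, w₁) = α₂` and `∠(w₁ + w₂, w₂) = α₁`. -/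
theorem angle_of_sum_of_cap_vectors
    (d : ℕ) (α₁ α₂ : ℝ) (hα₁ : 0 < α₁) (hα₂ : 0 < α₂) (hsum : α₁ + α₂ ≤ π / 2)
    (u₁ u₂ : EuclideanSpace ℝ (Fin (d + 1))) (hu₁ : ‖u₁‖ = 1) (hu₂ : ‖u₂‖ = 1)
    (hnorm : ‖Real.sin α₁ • u₁ + Real.sin α₂ • u₂‖ = Real.sin (α₁ + α₂)) :
    InnerProductGeometry.angle (Real.sin α₁ • u₁ + Real.sin α₂ • u₂)
        (Real.sin α₁ • u₁) = α₂ ∧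
    InnerProductGeometry.angle (Real.sin α₁ • u₁ + Real.sin α₂ • u₂)
        (Real.sin α₂ • u₂) = α₁ := by
  constructor
  · exact aux_angle d α₁ α₂ hα₁ hα₂ hsum u₁ u₂ hu₁ hu₂ hnorm
  · have h := aux_angle d α₂ α₁ hα₂ hα₁ (by linarith) u₂ u₁ hu₂ hu₁
      (by rw [add_comm (Real.sin α₂ • u₂), add_comm α₂ α₁]; exact hnorm)
    rwa [add_comm (Real.sin α₂ • u₂)] at h
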